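/- At any optimal solution of the bilinear reformulation the substituted variables are exact: if β_i < 0 for every i ∈ I and (p*, x*, y*) maximizes g(p,x,y) over the set {(p,x,y) : p ∈ S, x_i ≤ −p_i² for all i ∈ I, and y_{ij} = p_i·p_j for all (i,j) ∈ J}, then x*_i = −(p*_i)² for every i ∈ I. -/
import Mathlib


open scoped BigOperators

/-- At any optimal solution of the bilinear reformulation the substituted variables are exact:
if `β i < 0` for all `i` and `(p*, x*, y*)` maximizes the linearized objective `g` over the
lifted feasible set, then `x* i = -(p* i)^2` for every `i`. -/
theorem optimal_substitution_exact
    {I : Type*} [Fintype I] [Nonempty I] {m : ℕ}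
    (C : I → Finset I) (α β : I → ℝ) (γ : I → I → ℝ)
    (A : Matrix (Fin m) I ℝ) (b : Fin m → ℝ) (l u : I → ℝ)
    (hl0 : 0 ≤ l) (hlu : l ≤ u)
    (hβ : ∀ i, β i < 0)
    (S : Set (I → ℝ))
    (hS : S = {p | A.mulVec p ≤ b ∧ l ≤ p ∧ p ≤ u})
    (g : (I → ℝ) → (I → ℝ) → (I → I → ℝ) → ℝ)
    (hg : ∀ p x y, g p x y = ∑ i, (α i * p i - β i * x i + ∑ j ∈ C i, γ i j * y i j))
    (T : Set ((I → ℝ) × (I → ℝ) × (I → I → ℝ)))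
    (hT : T = {t : (I → ℝ) × (I → ℝ) × (I → I → ℝ) |
          t.1 ∈ S ∧ (∀ i, t.2.1 i ≤ -(t.1 i) ^ 2) ∧
          ∀ i, ∀ j ∈ C i, t.2.2 i j = t.1 i * t.1 j})
    (pstar : I → ℝ) (xstar : I → ℝ) (ystar : I → I → ℝ)
    (hfeas : (pstar, xstar, ystar) ∈ T)
    (hopt : ∀ t ∈ T, g t.1 t.2.1 t.2.2 ≤ g pstar xstar ystar) :
    ∀ i, xstar i = -(pstar i) ^ 2 := by
  classical
  intro i
  subst hT
  obtain ⟨hpS, hx, hy⟩ := hfeas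
  set x' : I → ℝ := Function.update xstar i (-(pstar i) ^ 2) with hx'
  have hfeas' : (pstar, x', ystar) ∈
      {t : (I → ℝ) × (I → ℝ) × (I → I → ℝ) |
        t.1 ∈ S ∧ (∀ i, t.2.1 i ≤ -(t.1 i) ^ 2) ∧
        ∀ i, ∀ j ∈ C i, t.2.2 i j = t.1 i * t.1 j} := by
    refine ⟨hpS, ?_, hy⟩
    intro k
    by_cases hk : k = i
    · subst hk; simp [hx']
    · simpa [hx', Function.update_of_ne hk] using hx k
  have hle := hopt _ hfeas'
  rw [hg, hg] at hle
  have hdiff : ∀ k, (α k * pstar k - β k * x' k + ∑ j ∈ C k, γ k j * ystar k j)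
      - (α k * pstar k - β k * xstar k + ∑ j ∈ C k, γ k j * ystar k j)
      = β k * (xstar k - x' k) := by intro k; ring
  have hsum : ∑ k, (α k * pstar k - β k * x' k + ∑ j ∈ C k, γ k j * ystar k j)
      - ∑ k, (α k * pstar k - β k * xstar k + ∑ j ∈ C k, γ k j * ystar k j)
      = β i * (xstar i - x' i) := by
    rw [← Finset.sum_sub_distrib]
    rw [Finset.sum_congr rfl fun k _ => hdiff k]
    rw [Finset.sum_eq_single i]
    · intro k _ hk; simp [hx', Function.update_of_ne hk]
    · intro h; exact absurd (Finset.mem_univ i) h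
  have h1 : β i * (xstar i - x' i) ≤ 0 := by linarith [hsum, hle]
  have hxi : xstar i ≤ x' i := by simp [hx']; exact hx i
  have hβi := hβ i
  have : xstar i = x' i := by nlinarith
  simpa [hx'] using this
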